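/- For 1 < p < ∞ and n ≥ 2, the function v(x) = |x|^α x₁ is p-harmonic on ℝⁿ \ {0} (i.e. div(|∇v|^{p-2}∇v) = 0 pointwise) if and only if: (i) α = 0, or (ii) α = -2 and p = n, or (iii) α = -n and p = 2. -/

import Mathlib

open Real
open scoped RealInnerProductSpace

/-- The `p`-Laplacian `div(|∇f|^(p-2) ∇f)` of `f`, computed classically as the trace of the
derivative of the vector field `y ↦ ‖∇f(y)‖^(p-2) • ∇f(y)`. -/
noncomputable def pLaplacian {n : ℕ} (p : ℝ) (f : EuclideanSpace ℝ (Fin n) → ℝ)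
    (x : EuclideanSpace ℝ (Fin n)) : ℝ :=
  LinearMap.trace ℝ (EuclideanSpace ℝ (Fin n))
    ((fderiv ℝ (fun y => ‖gradient f y‖ ^ (p - 2) • gradient f y) x).toLinearMap)

lemma trace_rank_one {n : ℕ} (f : EuclideanSpace ℝ (Fin n) →L[ℝ] ℝ) (u : EuclideanSpace ℝ (Fin n)) :
    LinearMap.trace ℝ _ ((f.smulRight u).toLinearMap) = f u := by
  have h : (f.smulRight u).toLinearMap
      = (LinearMap.toSpanSingleton ℝ _ u).comp (f : _ →ₗ[ℝ] ℝ) := by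
    ext w; simp [LinearMap.toSpanSingleton_apply]
  rw [h, LinearMap.trace_comp_comm']
  have h2 : (f : _ →ₗ[ℝ] ℝ).comp (LinearMap.toSpanSingleton ℝ _ u) = (f u) • LinearMap.id := by
    ext r; simp [LinearMap.toSpanSingleton_apply, mul_comm]
  rw [h2, map_smul, LinearMap.trace_id]
  simp

lemma grad_formula {n : ℕ} (α : ℝ) (i : Fin n) (y : EuclideanSpace ℝ (Fin n)) (hy : y ≠ 0) :
    HasGradientAt (fun z : EuclideanSpace ℝ (Fin n) => ‖z‖ ^ α * z i)
      ((α * ((‖y‖^2 : ℝ)) ^ (α/2 - 1) * y i) • y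
        + ((‖y‖^2 : ℝ) ^ (α/2)) • EuclideanSpace.single i (1:ℝ)) y := by
  have hN0 : (‖y‖^2 : ℝ) ≠ 0 := pow_ne_zero _ (norm_ne_zero_iff.mpr hy)
  have hNy : HasFDerivAt (fun z : EuclideanSpace ℝ (Fin n) => (‖z‖^2 : ℝ))
      (2 • (innerSL ℝ y)) y := (hasStrictFDerivAt_norm_sq y).hasFDerivAt
  have hty : HasFDerivAt (fun z : EuclideanSpace ℝ (Fin n) => z i)
      ((EuclideanSpace.proj i : EuclideanSpace ℝ (Fin n) →L[ℝ] ℝ)) y :=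
    (EuclideanSpace.proj i : EuclideanSpace ℝ (Fin n) →L[ℝ] ℝ).hasFDerivAt
  have h1 := (hNy.rpow_const (p := α/2) (Or.inl hN0)).mul hty
  have hveq : (fun z : EuclideanSpace ℝ (Fin n) => ‖z‖ ^ α * z i)
      = fun z => ((‖z‖^2:ℝ)) ^ (α/2) * z i := by
    funext z
    rw [← Real.rpow_natCast ‖z‖ 2, ← Real.rpow_mul (norm_nonneg z)]
    ring_nf
  rw [hveq, hasGradientAt_iff_hasFDerivAt]
  convert h1 using 1
  · rfl
  · rfl
  ext w
  simp only [InnerProductSpace.toDual_apply_apply, InnerProductSpace.toDualMap_apply_apply, PiLp.proj_apply, inner_add_left, real_inner_smul_left,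
    ContinuousLinearMap.add_apply, ContinuousLinearMap.smul_apply, ContinuousLinearMap.coe_smul',
    Pi.smul_apply, innerSL_apply_apply, EuclideanSpace.inner_single_left,
    map_one, smul_eq_mul]
  ring

lemma master {n : ℕ} (p α q β c C₁ C₂ : ℝ)
    (hq : q = (p-2)/2) (hβ : β = (α-1)*q + (α-2)/2) (hc : c = α*(α+2))
    (hC₁ : C₁ = α*((n:ℝ) + 2*β + 2*q + 1) + 2*β + 2) (hC₂ : C₂ = 2*q*(1+c))
    (i : Fin n) (x : EuclideanSpace ℝ (Fin n)) (hx : x ≠ 0)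
    (hSx : 0 < ‖x‖^2 + c * (x i)^2) :
    pLaplacian p (fun y => ‖y‖ ^ α * y i) x =
      ((‖x‖^2 : ℝ)) ^ β * (‖x‖^2 + c * (x i)^2) ^ (q-1) * x i *
        (C₁ * (‖x‖^2 + c * (x i)^2) + C₂ * ‖x‖^2) := by
  have hEdef : True := trivial
  set E0 : EuclideanSpace ℝ (Fin n) := EuclideanSpace.single i (1:ℝ) with hE0
  set v : EuclideanSpace ℝ (Fin n) → ℝ := fun y => ‖y‖ ^ α * y i with hv
  set N : EuclideanSpace ℝ (Fin n) → ℝ := fun y => ‖y‖^2 with hN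
  set t : EuclideanSpace ℝ (Fin n) → ℝ := fun y => y i with ht
  set S : EuclideanSpace ℝ (Fin n) → ℝ := fun y => N y + c * (t y * t y) with hS
  set F : EuclideanSpace ℝ (Fin n) → ℝ := fun y => α * ((N y) ^ β * ((S y) ^ q * t y)) with hF
  set Ψ : EuclideanSpace ℝ (Fin n) → ℝ := fun y => (N y) ^ (β+1) * (S y) ^ q with hΨ
  -- the open set where everything is nice
  have hUopen : IsOpen {y : EuclideanSpace ℝ (Fin n) | y ≠ 0 ∧ 0 < S y} := by
    apply IsOpen.inter isOpen_ne
    have hScont : Continuous S := by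
      apply Continuous.add
      · exact (continuous_norm.pow 2)
      · exact (continuous_const.mul (((EuclideanSpace.proj i : EuclideanSpace ℝ (Fin n) →L[ℝ] ℝ).continuous).mul ((EuclideanSpace.proj i : EuclideanSpace ℝ (Fin n) →L[ℝ] ℝ).continuous)))
    exact isOpen_lt continuous_const hScont
  have hxU : x ∈ {y : EuclideanSpace ℝ (Fin n) | y ≠ 0 ∧ 0 < S y} :=
    ⟨hx, by simp only [hS, hN, ht, ← pow_two]; exact hSx⟩
  have hUnhds : {y : EuclideanSpace ℝ (Fin n) | y ≠ 0 ∧ 0 < S y} ∈ nhds x := hUopen.mem_nhds hxU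
  -- pointwise formula for the vector field on U
  have hWeq : ∀ y : EuclideanSpace ℝ (Fin n), y ∈ {y : EuclideanSpace ℝ (Fin n) | y ≠ 0 ∧ 0 < S y} →
      ‖gradient v y‖ ^ (p-2) • gradient v y = F y • y + Ψ y • E0 := by
    rintro y ⟨hy0, hSy⟩
    have hNpos : 0 < N y := pow_pos (norm_pos_iff.mpr hy0) 2
    have key : ∀ e1 e2 : ℝ, (N y)^e1 * (N y)^e2 = (N y)^(e1+e2) :=
      fun e1 e2 => (Real.rpow_add hNpos e1 e2).symm
    set a : ℝ := α * ((‖y‖^2 : ℝ)) ^ (α/2 - 1) * y i with ha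
    set b : ℝ := ((‖y‖^2 : ℝ)) ^ (α/2) with hb
    have hgrad : gradient v y = a • y + b • E0 := (grad_formula α i y hy0).gradient
    have hnorm : ‖a • y + b • E0‖^2 = (N y)^(α-1) * S y := by
      have hE0n : ⟪E0, E0⟫ = 1 := by
        simp [hE0, EuclideanSpace.inner_single_left, EuclideanSpace.single_apply]
      have hE0y : ⟪E0, y⟫ = y i := by
        simp [hE0, EuclideanSpace.inner_single_left]
      have hyE0 : ⟪y, E0⟫ = y i := by
        simp [hE0, EuclideanSpace.inner_single_right]
      have hE0norm : ‖E0‖ = 1 := by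
        simp [hE0]
      have expand : ‖a • y + b • E0‖^2 = a^2 * N y + 2*(a*b)*(y i) + b^2 := by
        rw [norm_add_sq_real, norm_smul, norm_smul, real_inner_smul_left, real_inner_smul_right,
          hyE0, hE0norm]
        simp only [Real.norm_eq_abs, mul_pow, sq_abs, hN]
        ring
      rw [expand, ha, hb]
      have m1 : ((‖y‖^2 : ℝ)) ^ (α/2 - 1) * ((‖y‖^2 : ℝ)) ^ (α/2 - 1) * N y = (N y)^(α-1) := by
        rw [show ((‖y‖^2 : ℝ)) = N y from rfl, key, show α/2 - 1 + (α/2 - 1) = (α-2) by ring,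
          show α - 1 = (α-2) + 1 by ring, Real.rpow_add_one hNpos.ne']
      have m2 : ((‖y‖^2 : ℝ)) ^ (α/2 - 1) * ((‖y‖^2 : ℝ)) ^ (α/2) = (N y)^(α-1) := by
        rw [show ((‖y‖^2 : ℝ)) = N y from rfl, key]; congr 1; ring
      have m3 : ((‖y‖^2 : ℝ)) ^ (α/2) * ((‖y‖^2 : ℝ)) ^ (α/2) = (N y)^(α-1) * N y := by
        rw [show ((‖y‖^2 : ℝ)) = N y from rfl, key, show α/2 + α/2 = (α-1) + 1 by ring,
          Real.rpow_add_one hNpos.ne']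
      simp only [hS, ht]
      linear_combination (α^2 * (y i)^2) * m1 + (2*α*(y i)^2) * m2 + m3
        - ((N y)^(α-1) * (y i)^2) * hc
    have hpow : ‖a • y + b • E0‖ ^ (p-2) = (N y)^((α-1)*q) * (S y)^q := by
      have h1 : ‖a • y + b • E0‖ ^ (p-2) = ((‖a • y + b • E0‖^(2:ℕ) : ℝ))^q := by
        rw [← Real.rpow_natCast ‖a • y + b • E0‖ 2, ← Real.rpow_mul (norm_nonneg _)]
        congr 1
        rw [hq]; push_cast; ring
      rw [h1, hnorm, Real.mul_rpow (Real.rpow_nonneg hNpos.le _) hSy.le,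
        ← Real.rpow_mul hNpos.le]
    rw [hgrad, hpow, smul_add, smul_smul, smul_smul]
    congr 1
    · congr 1
      rw [ha, hF]
      simp only [ht]
      rw [show ((‖y‖^2 : ℝ)) = N y from rfl]
      rw [show (N y)^((α-1)*q) * (S y)^q * (α * (N y)^(α/2-1) * y i)
          = α * ((N y)^((α-1)*q) * (N y)^(α/2-1) * ((S y)^q * y i)) by ring, key]
      rw [hβ]; congr 2; ring
    · congr 1
      rw [hb, hΨ]
      rw [show ((‖y‖^2 : ℝ)) = N y from rfl]
      rw [show (N y)^((α-1)*q) * (S y)^q * (N y)^(α/2)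
          = (N y)^((α-1)*q) * (N y)^(α/2) * (S y)^q by ring, key]
      rw [hβ]; congr 2; ring
  -- derivatives at x
  have hNxpos : 0 < N x := pow_pos (norm_pos_iff.mpr hx) 2
  have hSxpos : 0 < S x := by simp only [hS, hN, ht, ← pow_two]; exact hSx
  have hNx : HasFDerivAt N (2 • (innerSL ℝ x)) x := (hasStrictFDerivAt_norm_sq x).hasFDerivAt
  have htx : HasFDerivAt t (EuclideanSpace.proj i : EuclideanSpace ℝ (Fin n) →L[ℝ] ℝ) x :=
    (EuclideanSpace.proj i : EuclideanSpace ℝ (Fin n) →L[ℝ] ℝ).hasFDerivAt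
  have hSfd : HasFDerivAt S _ x := hNx.add ((htx.mul htx).const_mul c)
  have hFfd : HasFDerivAt F _ x :=
    ((hNx.rpow_const (p := β) (Or.inl hNxpos.ne')).mul
      ((hSfd.rpow_const (p := q) (Or.inl hSxpos.ne')).mul htx)).const_mul α
  have hΨfd : HasFDerivAt Ψ _ x :=
    (hNx.rpow_const (p := β+1) (Or.inl hNxpos.ne')).mul
      (hSfd.rpow_const (p := q) (Or.inl hSxpos.ne'))
  have hW := (hFfd.smul (hasFDerivAt_id x)).add (hΨfd.smul (hasFDerivAt_const E0 x))
  have hev : (fun y => ‖gradient v y‖ ^ (p-2) • gradient v y)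
      =ᶠ[nhds x] (fun y => F y • y + Ψ y • E0) :=
    Filter.eventuallyEq_of_mem hUnhds hWeq
  have hfd := hev.fderiv_eq.trans hW.fderiv
  unfold pLaplacian
  rw [hfd]
  simp only [smul_zero, add_zero]
  simp only [ContinuousLinearMap.coe_add, ContinuousLinearMap.coe_smul, map_add, map_smul,
    trace_rank_one, ContinuousLinearMap.coe_id, LinearMap.trace_id, finrank_euclideanSpace_fin]
  simp only [ContinuousLinearMap.coe_zero, map_zero, zero_add, id_eq, ContinuousLinearMap.add_apply,
    ContinuousLinearMap.smul_apply, ContinuousLinearMap.coe_smul', Pi.smul_apply,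
    innerSL_apply_apply, PiLp.proj_apply, smul_eq_mul, real_inner_self_eq_norm_sq, hE0,
    EuclideanSpace.inner_single_right, EuclideanSpace.single_apply, if_pos, map_one,
    mul_one, conj_trivial]
  simp only [hF, hΨ, hN, hS, ht, Pi.mul_apply]
  have hne : (‖x‖^2 : ℝ) ≠ 0 := (pow_pos (norm_pos_iff.mpr hx) 2).ne'
  have hSne : (‖x‖^2 + c * (x i * x i) : ℝ) ≠ 0 := by
    have h := hSx; nlinarith [h]
  have eN1 : (‖x‖^2 : ℝ)^(β+1) = (‖x‖^2 : ℝ)^β * ‖x‖^2 := Real.rpow_add_one hne β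
  have eN2 : (‖x‖^2 : ℝ)^β = (‖x‖^2 : ℝ)^(β-1) * ‖x‖^2 := by
    rw [← Real.rpow_add_one hne (β-1), sub_add_cancel]
  have eS : (‖x‖^2 + c * (x i * x i) : ℝ)^q
      = (‖x‖^2 + c * (x i * x i) : ℝ)^(q-1) * (‖x‖^2 + c * (x i * x i)) := by
    rw [← Real.rpow_add_one hSne (q-1), sub_add_cancel]
  rw [show β + 1 - 1 = β by ring]
  rw [show (‖x‖^2 + c * x i ^ 2 : ℝ) = ‖x‖^2 + c * (x i * x i) by ring]
  rw [eN1, eS, eN2]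
  subst hC₁ hC₂
  ring

set_option maxHeartbeats 1000000 in
theorem stmt_1 (n : ℕ) (hn : 2 ≤ n) (p α : ℝ) (hp : 1 < p)
    (v : EuclideanSpace ℝ (Fin n) → ℝ)
    (hv : v = fun y => ‖y‖ ^ α * y ⟨0, by omega⟩) :
    (∀ x : EuclideanSpace ℝ (Fin n), x ≠ 0 → gradient v x ≠ 0 → pLaplacian p v x = 0) ↔
      (α = 0 ∨ (α = -2 ∧ p = n) ∨ (α = -n ∧ p = 2)) := by
  subst hv
  have hn0 : 0 < n := by omega
  have hn1 : 1 < n := by omega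
  have hn' : (2:ℝ) ≤ (n:ℝ) := by exact_mod_cast hn
  set i0 : Fin n := ⟨0, by omega⟩ with hi0
  set i1 : Fin n := ⟨1, by omega⟩ with hi1
  have hii : i1 ≠ i0 := by simp [hi0, hi1, Fin.ext_iff]
  constructor
  · intro h
    by_cases hα : α = 0
    · exact Or.inl hα
    set q : ℝ := (p-2)/2 with hq
    set β : ℝ := (α-1)*q + (α-2)/2 with hβ
    set c : ℝ := α*(α+2) with hc
    set C₁ : ℝ := α*((n:ℝ) + 2*β + 2*q + 1) + 2*β + 2 with hC₁
    set C₂ : ℝ := 2*q*(1+c) with hC₂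
    have test : ∀ s : ℝ, s ≠ 0 → C₁ * (1 + s^2 + c) + C₂ * (1 + s^2) = 0 := by
      intro s hs
      have hs2 : 0 < s^2 := by positivity
      set xs : EuclideanSpace ℝ (Fin n) :=
        (EuclideanSpace.single i0 (1:ℝ)) + s • (EuclideanSpace.single i1 (1:ℝ)) with hxs
      have hii' : i0 ≠ i1 := hii.symm
      have h0 : xs i0 = 1 := by
        simp [hxs, EuclideanSpace.single_apply, hii, hii']
      have h1 : xs i1 = s := by
        simp [hxs, EuclideanSpace.single_apply, hii]
      have hxne : xs ≠ 0 := by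
        intro hh; rw [hh] at h0; simp at h0
      have hnorm2 : ‖xs‖^2 = 1 + s^2 := by
        rw [← real_inner_self_eq_norm_sq, hxs]
        simp only [inner_add_left, inner_add_right, real_inner_smul_left, real_inner_smul_right,
          EuclideanSpace.inner_single_left, EuclideanSpace.single_apply, hii, hii.symm]
        simp
        rw [if_neg hii.symm]
        ring
      have h1c : (0:ℝ) ≤ 1 + c := by nlinarith [sq_nonneg (α+1)]
      have hSpos : 0 < ‖xs‖^2 + c * (xs i0)^2 := by
        rw [hnorm2, h0]; nlinarith
      have hNpos : (0:ℝ) < 1 + s^2 := by nlinarith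
      have hgradne : gradient (fun y : EuclideanSpace ℝ (Fin n) => ‖y‖ ^ α * y i0) xs ≠ 0 := by
        intro hh
        rw [(grad_formula α i0 xs hxne).gradient] at hh
        have happ := congrArg (fun z : EuclideanSpace ℝ (Fin n) => z i1) hh
        simp [EuclideanSpace.single_apply, hii, h1, hnorm2, h0] at happ
        have hrp : ((1:ℝ) + s^2)^(α/2-1) ≠ 0 := (Real.rpow_pos_of_pos hNpos _).ne'
        rcases happ with h' | h'
        · rcases h' with h'' | h''
          · exact hα h''
          · exact hrp h''
        · exact hs h'
      have hzz := (master p α q β c C₁ C₂ hq hβ hc hC₁ hC₂ i0 xs hxne hSpos).symm.trans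
        (h xs hxne hgradne)
      rw [hnorm2, h0] at hzz
      have hA : (0:ℝ) < (1+s^2:ℝ)^β * (1+s^2+c*1^2)^(q-1) :=
        mul_pos (Real.rpow_pos_of_pos hNpos _) (Real.rpow_pos_of_pos (by nlinarith) _)
      have := mul_eq_zero.mp hzz
      rcases this with h' | h'
      · rcases mul_eq_zero.mp h' with h'' | h''
        · exact absurd h'' hA.ne'
        · exact absurd h'' one_ne_zero
      · linarith [h']
    have eq1 := test 1 one_ne_zero
    have eq2 := test 2 two_ne_zero
    rw [hC₁, hC₂, hβ, hq, hc] at eq1 eq2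
    have he1 : (α + (n:ℝ)) + (p-2)*(2*α+3) = 0 := by
      have hαe : α * ((α + (n:ℝ)) + (p-2)*(2*α+3)) = 0 := by
        linear_combination (1/3) * eq2 - (1/3) * eq1
      exact (mul_eq_zero.mp hαe).resolve_left hα
    have hB' : (α*(α+2)) * (α*(α+(n:ℝ)) + (p-2)*(α^2+α-1)) = 0 := by
      linear_combination (5/3) * eq1 - (2/3) * eq2
    rcases mul_eq_zero.mp hB' with h1 | h2
    · have hα2 : α = -2 := by
        rcases mul_eq_zero.mp h1 with h' | h'
        · exact absurd h' hα
        · linarith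
      right; left
      refine ⟨hα2, ?_⟩
      rw [hα2] at he1; linarith
    · have key : (p-2)*(α+1)^2 = 0 := by linear_combination α * he1 - h2
      rcases mul_eq_zero.mp key with hp2 | hsq
      · have hpe : p = 2 := by linarith
        right; right
        refine ⟨?_, hpe⟩
        rw [hpe] at he1; linarith
      · have hα1 : α = -1 := by nlinarith [sq_nonneg (α+1)]
        exfalso
        rw [hα1] at he1
        have : p = 3 - (n:ℝ) := by linarith
        linarith
  · rintro (hα | ⟨hα, hpn⟩ | ⟨hα, hp2⟩) x hx _
    all_goals subst hα
    · refine (master p 0 ((p-2)/2) ((0-1)*((p-2)/2)+(0-2)/2) (0*(0+2))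
        (0*((n:ℝ) + 2*((0-1)*((p-2)/2)+(0-2)/2) + 2*((p-2)/2) + 1)
          + 2*((0-1)*((p-2)/2)+(0-2)/2) + 2)
        (2*((p-2)/2)*(1+0*(0+2))) rfl rfl rfl rfl rfl i0 x hx ?_).trans ?_
      · have := pow_pos (norm_pos_iff.mpr hx) 2
        nlinarith [sq_nonneg (x i0)]
      · ring
    · subst hpn
      refine (master (n:ℝ) (-2) (((n:ℝ)-2)/2) ((-2-1)*(((n:ℝ)-2)/2)+(-2-2)/2) ((-2)*(-2+2))
        ((-2)*((n:ℝ) + 2*((-2-1)*(((n:ℝ)-2)/2)+(-2-2)/2) + 2*(((n:ℝ)-2)/2) + 1)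
          + 2*((-2-1)*(((n:ℝ)-2)/2)+(-2-2)/2) + 2)
        (2*(((n:ℝ)-2)/2)*(1+(-2)*(-2+2))) rfl rfl rfl rfl rfl i0 x hx ?_).trans ?_
      · have := pow_pos (norm_pos_iff.mpr hx) 2
        nlinarith [sq_nonneg (x i0)]
      · ring
    · subst hp2
      refine (master 2 (-(n:ℝ)) ((2-2)/2) ((-(n:ℝ)-1)*((2-2)/2)+(-(n:ℝ)-2)/2) ((-(n:ℝ))*(-(n:ℝ)+2))
        ((-(n:ℝ))*((n:ℝ) + 2*((-(n:ℝ)-1)*((2-2)/2)+(-(n:ℝ)-2)/2) + 2*((2-2)/2) + 1)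
          + 2*((-(n:ℝ)-1)*((2-2)/2)+(-(n:ℝ)-2)/2) + 2)
        (2*((2-2)/2)*(1+(-(n:ℝ))*(-(n:ℝ)+2))) rfl rfl rfl rfl rfl i0 x hx ?_).trans ?_
      · have h1 : (0:ℝ) ≤ (n:ℝ) - 2 := by linarith
        have h2 : (0:ℝ) ≤ (n:ℝ) := by positivity
        have h3 := pow_pos (norm_pos_iff.mpr hx) 2
        nlinarith [mul_nonneg (mul_nonneg h1 h2) (sq_nonneg (x i0))]
      · ring
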